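/- Let n ≥ 2 and let A ∈ ℝ^{n×n} be symmetric satisfying condition (M) for the Lorentz cone L. Then A_{1j} = A_{j1} = 0 for all j ∈ {2, …, n}, i.e., A = diag(A_{11}, Ã) for some symmetric matrix Ã ∈ ℝ^{(n−1)×(n−1)}. -/

import Mathlib

open Matrix RealInnerProductSpace

/-- The Lorentz cone `L = {x ∈ ℝ^{n+1} : x₁ ≥ √(x₂² + ⋯ + x_{n+1}²)}`. -/
def lorentzCone (n : ℕ) : Set (EuclideanSpace ℝ (Fin (n + 1))) :=
  {x | Real.sqrt (∑ i : Fin n, x i.succ ^ 2) ≤ x 0}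


/-- Condition (M): `⟨Ax,x⟩ ≥ ⟨Ay,y⟩` for all `x ∈ 𝕊` and `y ∈ K ∩ 𝕊` with `x ⊥ y`. -/
def CondM {n : ℕ} (A : Matrix (Fin n) (Fin n) ℝ) (K : Set (EuclideanSpace ℝ (Fin n))) : Prop :=
  ∀ x y : EuclideanSpace ℝ (Fin n), ‖x‖ = 1 → y ∈ K → ‖y‖ = 1 → ⟪x, y⟫ = 0 →
    ⟪Matrix.toEuclideanLin A y, y⟫ ≤ ⟪Matrix.toEuclideanLin A x, x⟫

lemma sum_two_aux {m : ℕ} (j : Fin (m + 1)) (hj : j ≠ 0) (f : Fin (m + 1) → ℝ)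
    (a b : ℝ) (h : ∀ k, f k = if k = 0 then a else if k = j then b else 0) :
    ∑ k, f k = a + b := by
  have h2 : ∀ k : Fin (m + 1), f k = (if k = 0 then a else 0) + (if k = j then b else 0) := by
    intro k
    rw [h k]
    by_cases h1 : k = 0
    · subst h1; simp [Ne.symm hj]
    · simp [h1]
  simp_rw [h2, Finset.sum_add_distrib, Finset.sum_ite_eq', Finset.mem_univ, if_true]

/-- If a symmetric matrix `A` satisfies condition (M) for the Lorentz cone, then
all off-diagonal entries of its first row and first column vanish. -/
theorem quadratic_spherical_stmt17 (n : ℕ) (hn : 1 ≤ n)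
    (A : Matrix (Fin (n + 1)) (Fin (n + 1)) ℝ) (hA : A.IsSymm)
    (hM : CondM A (lorentzCone n)) :
    ∀ j : Fin (n + 1), j ≠ 0 → A 0 j = 0 ∧ A j 0 = 0 := by
  intro j hj
  have hA0j : A j 0 = A 0 j := by
    conv_lhs => rw [← hA]
    rfl
  set c : ℝ := Real.sqrt 2⁻¹ with hc
  have hc2 : c ^ 2 = 2⁻¹ := Real.sq_sqrt (by norm_num)
  have hcpos : 0 < c := Real.sqrt_pos.mpr (by norm_num)
  -- the vectors
  set v : ℝ → (Fin (n + 1) → ℝ) := fun ε k => if k = 0 then c else if k = j then ε * c else 0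
    with hv
  set u : ℝ → EuclideanSpace ℝ (Fin (n + 1)) := fun ε => (WithLp.equiv 2 _).symm (v ε) with hu
  have huapp : ∀ ε k, u ε k = v ε k := fun ε k => rfl
  -- norms
  have hnorm : ∀ ε : ℝ, ε ^ 2 = 1 → ‖u ε‖ = 1 := by
    intro ε hε
    rw [EuclideanSpace.norm_eq]
    have : ∑ k, ‖u ε k‖ ^ 2 = c ^ 2 + (ε * c) ^ 2 := by
      apply sum_two_aux j hj
      intro k
      rw [huapp]
      by_cases h1 : k = 0
      · simp [hv, h1, sq_abs]
      · by_cases h2 : k = j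
        · simp [hv, h1, h2, sq_abs]
        · simp [hv, h1, h2]
    rw [this, hc2, mul_pow, hε, hc2]
    norm_num
  -- cone membership
  have hcone : ∀ ε : ℝ, ε ^ 2 = 1 → u ε ∈ lorentzCone n := by
    intro ε hε
    show Real.sqrt (∑ i : Fin n, u ε i.succ ^ 2) ≤ u ε 0
    have h0 : u ε 0 = c := by rw [huapp]; simp [hv]
    have hsum : ∑ i : Fin n, u ε i.succ ^ 2 = 2⁻¹ := by
      have hpt : ∀ i : Fin n, u ε i.succ ^ 2 = if i = j.pred hj then 2⁻¹ else 0 := by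
        intro i
        rw [huapp]
        have hsucc : i.succ ≠ 0 := Fin.succ_ne_zero i
        by_cases h1 : i = j.pred hj
        · subst h1
          simp [hv, Fin.succ_pred, hsucc, mul_pow, hε, hc2]
        · have hne : i.succ ≠ j := by
            intro h2
            apply h1
            subst h2
            exact (Fin.pred_succ i).symm
          simp [hv, hsucc, hne, h1]
      simp [hpt]
    rw [h0, hsum, hc]
  -- inner product orthogonality
  have hinner : ⟪u 1, u (-1)⟫ = (0 : ℝ) := by
    rw [PiLp.inner_apply]
    simp only [RCLike.inner_apply, conj_trivial]
    have : ∑ k, u 1 k * u (-1) k = c * c + (1 * c) * (-1 * c) := by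
      apply sum_two_aux j hj
      intro k
      rw [huapp, huapp]
      by_cases h1 : k = 0
      · simp [hv, h1, Ne.symm hj]
      · by_cases h2 : k = j
        · simp [hv, h1, h2]
        · simp [hv, h1, h2]
    rw [show ∑ k, u (-1) k * u 1 k = ∑ k, u 1 k * u (-1) k from
      Finset.sum_congr rfl (fun k _ => mul_comm _ _), this]; ring
  have hinner' : ⟪u (-1), u 1⟫ = (0 : ℝ) := by
    rw [real_inner_comm]; exact hinner
  -- quadratic form
  have hquad : ∀ ε : ℝ, ε ^ 2 = 1 →
      ⟪Matrix.toEuclideanLin A (u ε), u ε⟫ = (A 0 0 + A j j) * 2⁻¹ + ε * A 0 j := by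
    intro ε hε
    rw [PiLp.inner_apply]
    simp only [RCLike.inner_apply, conj_trivial]
    have hmul : ∀ i, (Matrix.toEuclideanLin A (u ε)) i = A i 0 * c + A i j * (ε * c) := by
      intro i
      have hrw : (Matrix.toEuclideanLin A (u ε)) i = (A *ᵥ v ε) i := rfl
      rw [hrw, Matrix.mulVec, dotProduct]
      apply sum_two_aux j hj
      intro k
      by_cases h1 : k = 0
      · simp [hv, h1, Ne.symm hj]
      · by_cases h2 : k = j
        · simp [hv, h1, h2, hj]
        · simp [hv, h1, h2]
    have hs : ∑ k, (Matrix.toEuclideanLin A (u ε)) k * u ε k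
        = (A 0 0 * c + A 0 j * (ε * c)) * c + (A j 0 * c + A j j * (ε * c)) * (ε * c) := by
      apply sum_two_aux j hj
      intro k
      rw [huapp]
      by_cases h1 : k = 0
      · subst h1; rw [hmul]; simp [hv, Ne.symm hj]
      · by_cases h2 : k = j
        · subst h2; rw [hmul]; simp [hv, h1]
        · simp [hv, h1, h2]
    rw [show ∑ k, u ε k * (Matrix.toEuclideanLin A (u ε)) k
        = ∑ k, (Matrix.toEuclideanLin A (u ε)) k * u ε k from
      Finset.sum_congr rfl (fun k _ => mul_comm _ _), hs, hA0j]
    have hcc : c * c = 2⁻¹ := by rw [← sq]; exact hc2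
    have hee : ε * ε = 1 := by rw [← sq]; exact hε
    have expand : (A 0 0 * c + A 0 j * (ε * c)) * c + (A 0 j * c + A j j * (ε * c)) * (ε * c)
        = A 0 0 * (c * c) + 2 * A 0 j * ε * (c * c) + A j j * (ε * ε) * (c * c) := by ring
    rw [expand, hcc, hee]
    ring
  have e1 : (1 : ℝ) ^ 2 = 1 := one_pow 2
  have em1 : (-1 : ℝ) ^ 2 = 1 := by norm_num
  have le1 := hM (u (-1)) (u 1) (hnorm _ em1) (hcone _ e1) (hnorm _ e1) hinner'
  have le2 := hM (u 1) (u (-1)) (hnorm _ e1) (hcone _ em1) (hnorm _ em1) hinner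
  rw [hquad _ e1, hquad _ em1] at le1 le2
  constructor
  · linarith
  · rw [hA0j]; linarith
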